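/- Let C be the cone {u ∈ ℝ² : the angle from the positive x-axis to u lies in [0, θ)} with apex angle θ = 2π/k, k even, k ≥ 4, and let T be the open isosceles triangle with apex at the origin, symmetric about the axis of C, whose side opposite the apex has length ℓ and lies at distance (ℓ/2)·cot(θ/2) from the apex. Let w be the point on that opposite side at distance r from one endpoint (0 ≤ r ≤ ℓ), and let T' be the reflection of T through the midpoint of the segment from the origin to w. Then the area of T' \ T equals α(r² + (ℓ−r)²), where α = cos(θ/2)/(4 sin(θ/2)). -/

import Mathlib

open Real MeasureTheory

section Stmt5AuxSection
open Set


namespace Stmt5Aux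

/-- The standard closed triangle (simplex) in `ℝ × ℝ`. -/
def Sset : Set (ℝ × ℝ) := {p | 0 ≤ p.1 ∧ 0 ≤ p.2 ∧ p.1 + p.2 ≤ 1}

/-- The linear map sending `e₁ ↦ a`, `e₂ ↦ b`. -/
noncomputable def lmap (a b : ℝ × ℝ) : (ℝ × ℝ) →ₗ[ℝ] (ℝ × ℝ) where
  toFun z := z.1 • a + z.2 • b
  map_add' x y := by simp [add_smul]; abel
  map_smul' c x := by simp [smul_smul, smul_add]

lemma lmap_apply (a b z : ℝ × ℝ) :
    lmap a b z = (z.1 * a.1 + z.2 * b.1, z.1 * a.2 + z.2 * b.2) := by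
  simp [lmap, Prod.ext_iff]

lemma lmap_image_vol (a b : ℝ × ℝ) (s : Set (ℝ × ℝ)) :
    volume (lmap a b '' s) = ENNReal.ofReal |a.1 * b.2 - a.2 * b.1| * volume s := by
  rw [Measure.addHaar_image_linearMap]
  congr 2
  rw [← LinearMap.det_toMatrix (Module.Basis.finTwoProd ℝ), Matrix.det_fin_two]
  simp [LinearMap.toMatrix_apply, lmap, Module.Basis.finTwoProd_zero, Module.Basis.finTwoProd_one,
    Module.Basis.coe_finTwoProd_repr]
  ring

lemma lmap_injective {a b : ℝ × ℝ} (hd : a.1 * b.2 - a.2 * b.1 ≠ 0) :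
    Function.Injective (lmap a b) := by
  rw [injective_iff_map_eq_zero]
  intro z hz
  rw [lmap_apply, Prod.ext_iff] at hz
  obtain ⟨h1, h2⟩ := hz
  simp only [Prod.fst_zero, Prod.snd_zero] at h1 h2
  have e1 : z.1 * (a.1 * b.2 - a.2 * b.1) = 0 := by linear_combination b.2 * h1 - b.1 * h2
  have e2 : z.2 * (a.1 * b.2 - a.2 * b.1) = 0 := by linear_combination a.1 * h2 - a.2 * h1
  have z1 : z.1 = 0 := by rcases mul_eq_zero.1 e1 with h | h; exact h; exact absurd h hd
  have z2 : z.2 = 0 := by rcases mul_eq_zero.1 e2 with h | h; exact h; exact absurd h hd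
  exact Prod.ext z1 z2

lemma convex_Sset : Convex ℝ Sset := by
  rintro x ⟨hx1, hx2, hx3⟩ y ⟨hy1, hy2, hy3⟩ s t hs ht hst
  refine ⟨?_, ?_, ?_⟩ <;> simp only [Prod.fst_add, Prod.snd_add, Prod.smul_fst, Prod.smul_snd,
    smul_eq_mul] <;> nlinarith

lemma hull3 (a b : ℝ × ℝ) : convexHull ℝ {0, a, b} = lmap a b '' Sset := by
  apply Subset.antisymm
  · apply convexHull_min _ (convex_Sset.linear_image (lmap a b))
    rintro x (rfl | rfl | rfl)
    · exact ⟨(0, 0), ⟨le_refl _, le_refl _, by norm_num⟩, by simp [lmap]⟩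
    · exact ⟨(1, 0), ⟨zero_le_one, le_refl _, by norm_num⟩, by simp [lmap]⟩
    · exact ⟨(0, 1), ⟨le_refl _, zero_le_one, by norm_num⟩, by simp [lmap]⟩
  · rintro x ⟨z, ⟨h1, h2, h3⟩, rfl⟩
    have := (convex_convexHull ℝ ({0, a, b} : Set (ℝ × ℝ))).sum_mem
      (t := Finset.univ) (w := ![z.1, z.2, 1 - z.1 - z.2]) (z := ![a, b, 0])
      (by intro i _; fin_cases i
          · simpa using h1
          · simpa using h2
          · simpa using (by linarith : (0:ℝ) ≤ 1 - z.1 - z.2))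
      (by simp [Fin.sum_univ_three]; try ring)
      (by intro i _; fin_cases i <;> exact subset_convexHull ℝ _ (by simp))
    simpa [Fin.sum_univ_three, lmap] using this

lemma vol_fst_eq (c : ℝ) : volume {p : ℝ × ℝ | p.1 = c} = 0 := by
  have : {p : ℝ × ℝ | p.1 = c} = ({c} : Set ℝ) ×ˢ (univ : Set ℝ) := by
    ext p; constructor
    · intro hp; exact ⟨hp.symm ▸ rfl, trivial⟩
    · rintro ⟨h1, -⟩; exact h1
  rw [this, Measure.volume_eq_prod, Measure.prod_prod]; simp

lemma vol_snd_eq (c : ℝ) : volume {p : ℝ × ℝ | p.2 = c} = 0 := by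
  have : {p : ℝ × ℝ | p.2 = c} = (univ : Set ℝ) ×ˢ ({c} : Set ℝ) := by
    ext p; constructor
    · intro hp; exact ⟨trivial, hp⟩
    · rintro ⟨-, h2⟩; exact h2
  rw [this, Measure.volume_eq_prod, Measure.prod_prod]; simp

lemma vol_diag : volume {p : ℝ × ℝ | p.1 + p.2 = 1} = 0 := by
  have h1 : {p : ℝ × ℝ | p.1 + p.2 = 1} = lmap (1, -1) (0, 1) '' {p : ℝ × ℝ | p.2 = 1} := by
    ext p
    constructor
    · intro hp
      exact ⟨(p.1, 1), by simp, by simp only [mem_setOf_eq] at hp; simp only [lmap]; dsimp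
                                   ext <;> simp <;> linarith⟩
    · rintro ⟨z, hz, rfl⟩
      simp only [mem_setOf_eq] at hz ⊢
      simp [lmap]; linarith
  rw [h1, lmap_image_vol, vol_snd_eq, mul_zero]

lemma vol_Sset : volume Sset = ENNReal.ofReal (1 / 2) := by
  set O := regionBetween (fun _ : ℝ => (0 : ℝ)) (fun x => 1 - x) (Ioo 0 1) with hO
  have hint : ∫ x in (0:ℝ)..1, (1 - x) = 1 / 2 := by
    rw [intervalIntegral.integral_sub intervalIntegrable_const
      intervalIntegral.intervalIntegrable_id, integral_id, intervalIntegral.integral_const]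
    norm_num
  have hi1 : IntegrableOn (fun _ : ℝ => (0 : ℝ)) (Ioo 0 1) volume :=
    (ContinuousOn.integrableOn_compact isCompact_Icc continuousOn_const).mono_set
      Ioo_subset_Icc_self
  have hi2 : IntegrableOn (fun x : ℝ => 1 - x) (Ioo 0 1) volume :=
    (ContinuousOn.integrableOn_compact isCompact_Icc
      ((continuous_const.sub continuous_id).continuousOn)).mono_set Ioo_subset_Icc_self
  have hvol : volume O = ENNReal.ofReal (1 / 2) := by
    rw [hO, Measure.volume_eq_prod, volume_regionBetween_eq_integral hi1 hi2
      measurableSet_Ioo (fun x hx => by simp only [sub_nonneg]; linarith [hx.2])]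
    rw [show ((fun x : ℝ => 1 - x) - fun _ => (0:ℝ)) = fun x : ℝ => 1 - x by funext x; simp]
    rw [← integral_Ioc_eq_integral_Ioo, ← intervalIntegral.integral_of_le zero_le_one, hint]
  have hsub : O ⊆ Sset := by
    rintro p ⟨hp1, hp2⟩
    have e1 : (0:ℝ) < p.1 := hp1.1
    have e2 : (0:ℝ) < p.2 := hp2.1
    have e3 : p.2 < 1 - p.1 := hp2.2
    exact ⟨e1.le, e2.le, by linarith⟩
  have hsup : Sset ⊆ O ∪ ({p : ℝ × ℝ | p.1 = 0} ∪ ({p : ℝ × ℝ | p.2 = 0}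
      ∪ {p : ℝ × ℝ | p.1 + p.2 = 1})) := by
    rintro p ⟨h1, h2, h3⟩
    rcases eq_or_lt_of_le h1 with h1' | h1'
    · exact Or.inr (Or.inl h1'.symm)
    rcases eq_or_lt_of_le h2 with h2' | h2'
    · exact Or.inr (Or.inr (Or.inl h2'.symm))
    rcases eq_or_lt_of_le h3 with h3' | h3'
    · exact Or.inr (Or.inr (Or.inr h3'))
    · exact Or.inl ⟨⟨h1', by linarith⟩, ⟨h2', show p.2 < 1 - p.1 by linarith⟩⟩
  refine le_antisymm ?_ ?_
  · calc volume Sset ≤ _ := measure_mono hsup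
      _ ≤ volume O + volume ({p : ℝ × ℝ | p.1 = 0} ∪ ({p : ℝ × ℝ | p.2 = 0}
          ∪ {p : ℝ × ℝ | p.1 + p.2 = 1})) := measure_union_le _ _
      _ = ENNReal.ofReal (1 / 2) := by
          rw [show volume ({p : ℝ × ℝ | p.1 = 0} ∪ ({p : ℝ × ℝ | p.2 = 0}
            ∪ {p : ℝ × ℝ | p.1 + p.2 = 1})) = 0 from measure_union_null (vol_fst_eq 0)
            (measure_union_null (vol_snd_eq 0) vol_diag), add_zero, hvol]
  · rw [← hvol]; exact measure_mono hsub

lemma D1_eq (t : ℝ) (ht0 : 0 ≤ t) :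
    {p : ℝ × ℝ | p.1 ≤ 0 ∧ p.2 ≤ t ∧ 0 ≤ p.1 + p.2} = lmap (0, t) (-t, t) '' Sset := by
  ext p
  constructor
  · rintro ⟨h1, h2, h3⟩
    rcases eq_or_lt_of_le ht0 with ht | ht
    · refine ⟨(0, 0), ⟨le_refl _, le_refl _, by norm_num⟩, ?_⟩
      rw [lmap_apply]
      have : p.1 = 0 := le_antisymm h1 (by linarith)
      have : p.2 = 0 := le_antisymm (by linarith [h2]) (by linarith)
      ext <;> simp <;> linarith
    · have hne : t ≠ 0 := ne_of_gt ht
      refine ⟨((p.1 + p.2) / t, -p.1 / t), ⟨div_nonneg h3 ht.le,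
        div_nonneg (by linarith) ht.le, ?_⟩, ?_⟩
      · rw [← add_div, div_le_one ht]; linarith
      · rw [lmap_apply]; ext <;> field_simp <;> ring
  · rintro ⟨z, ⟨hz1, hz2, hz3⟩, rfl⟩
    rw [lmap_apply]
    refine ⟨?_, ?_, ?_⟩ <;> simp only []
    · nlinarith
    · nlinarith
    · nlinarith

lemma D2_eq (t : ℝ) (ht1 : t ≤ 1) :
    {p : ℝ × ℝ | p.2 ≤ 0 ∧ p.1 ≤ 1 - t ∧ 0 ≤ p.1 + p.2}
      = lmap (1 - t, 0) (1 - t, t - 1) '' Sset := by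
  ext p
  constructor
  · rintro ⟨h1, h2, h3⟩
    rcases eq_or_lt_of_le ht1 with ht | ht
    · refine ⟨(0, 0), ⟨le_refl _, le_refl _, by norm_num⟩, ?_⟩
      rw [lmap_apply]
      have e1 : p.1 = 0 := le_antisymm (by linarith) (by linarith)
      have e2 : p.2 = 0 := le_antisymm h1 (by linarith)
      ext <;> simp <;> linarith
    · have hne : (1:ℝ) - t ≠ 0 := by linarith
      refine ⟨((p.1 + p.2) / (1 - t), -p.2 / (1 - t)), ⟨div_nonneg h3 (by linarith),
        div_nonneg (by linarith) (by linarith), ?_⟩, ?_⟩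
      · rw [← add_div, div_le_one (by linarith)]; linarith
      · rw [lmap_apply]; ext <;> field_simp <;> ring
  · rintro ⟨z, ⟨hz1, hz2, hz3⟩, rfl⟩
    rw [lmap_apply]
    refine ⟨?_, ?_, ?_⟩ <;> simp only []
    · nlinarith
    · nlinarith
    · nlinarith

lemma vol_D (t : ℝ) (ht0 : 0 ≤ t) (ht1 : t ≤ 1) :
    volume (((fun z : ℝ × ℝ => (1 - t, t) - z) '' Sset) \ Sset)
      = ENNReal.ofReal ((t ^ 2 + (1 - t) ^ 2) / 2) := by
  set D1 : Set (ℝ × ℝ) := {p | p.1 ≤ 0 ∧ p.2 ≤ t ∧ 0 ≤ p.1 + p.2} with hD1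
  set D2 : Set (ℝ × ℝ) := {p | p.2 ≤ 0 ∧ p.1 ≤ 1 - t ∧ 0 ≤ p.1 + p.2} with hD2
  have hK' : ((fun z : ℝ × ℝ => (1 - t, t) - z) '' Sset)
      = {p : ℝ × ℝ | p.1 ≤ 1 - t ∧ p.2 ≤ t ∧ 0 ≤ p.1 + p.2} := by
    ext p
    constructor
    · rintro ⟨z, ⟨hz1, hz2, hz3⟩, rfl⟩
      refine ⟨by simp; linarith, by simp; linarith, by simp; linarith⟩
    · rintro ⟨h1, h2, h3⟩
      refine ⟨(1 - t - p.1, t - p.2), ⟨by simp; linarith, by simp; linarith, by simp; linarith⟩, ?_⟩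
      ext <;> simp
  have hmeas1 : MeasurableSet D1 := by
    apply IsClosed.measurableSet
    exact ((isClosed_le continuous_fst continuous_const).inter
      ((isClosed_le continuous_snd continuous_const).inter
      (isClosed_le continuous_const (continuous_fst.add continuous_snd))))
  have hmeas2 : MeasurableSet D2 := by
    apply IsClosed.measurableSet
    exact ((isClosed_le continuous_snd continuous_const).inter
      ((isClosed_le continuous_fst continuous_const).inter
      (isClosed_le continuous_const (continuous_fst.add continuous_snd))))
  have hvol1 : volume D1 = ENNReal.ofReal (t ^ 2 / 2) := by
    rw [hD1, D1_eq t ht0, lmap_image_vol, vol_Sset, ← ENNReal.ofReal_mul (abs_nonneg _)]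
    congr 1
    rw [abs_of_nonneg (by nlinarith : (0:ℝ) ≤ 0 * t - t * (-t))]
    ring
  have hvol2 : volume D2 = ENNReal.ofReal ((1 - t) ^ 2 / 2) := by
    rw [hD2, D2_eq t ht1, lmap_image_vol, vol_Sset, ← ENNReal.ofReal_mul (abs_nonneg _)]
    congr 1
    rw [abs_of_nonpos (by nlinarith : (1 - t) * (t - 1) - 0 * (1 - t) ≤ 0)]
    ring
  set E := ((fun z : ℝ × ℝ => (1 - t, t) - z) '' Sset) \ Sset with hE
  have hsub : E ⊆ D1 ∪ D2 := by
    rintro p ⟨hp, hps⟩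
    rw [hK'] at hp
    obtain ⟨h1, h2, h3⟩ := hp
    by_cases hx : 0 ≤ p.1
    · have hy : ¬ (0 ≤ p.2) := fun hy => hps ⟨hx, hy, by linarith⟩
      exact Or.inr ⟨by linarith [not_le.1 hy], h1, h3⟩
    · exact Or.inl ⟨(not_le.1 hx).le, h2, h3⟩
  have hsup : D1 ∪ D2 ⊆ E ∪ ({p : ℝ × ℝ | p.1 = 0} ∪ {p : ℝ × ℝ | p.2 = 0}) := by
    rintro p (⟨h1, h2, h3⟩ | ⟨h1, h2, h3⟩)
    · rcases eq_or_lt_of_le h1 with hcase | hcase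
      · exact Or.inr (Or.inl hcase)
      · refine Or.inl ⟨?_, ?_⟩
        · rw [hK']; exact ⟨by linarith, h2, h3⟩
        · rintro ⟨c1, -, -⟩; linarith
    · rcases eq_or_lt_of_le h1 with hcase | hcase
      · exact Or.inr (Or.inr hcase)
      · refine Or.inl ⟨?_, ?_⟩
        · rw [hK']; exact ⟨h2, by linarith, h3⟩
        · rintro ⟨-, c2, -⟩; linarith
  have hint' : volume (D1 ∩ D2) = 0 := by
    apply measure_mono_null _ (vol_fst_eq 0)
    rintro p ⟨⟨a1, a2, a3⟩, ⟨b1, b2, b3⟩⟩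
    simp only [Set.mem_setOf_eq]; linarith
  have hsum : volume D1 + volume D2 = ENNReal.ofReal ((t ^ 2 + (1 - t) ^ 2) / 2) := by
    rw [hvol1, hvol2, ← ENNReal.ofReal_add (by positivity) (by positivity)]
    congr 1; ring
  refine le_antisymm ?_ ?_
  · calc volume E ≤ volume (D1 ∪ D2) := measure_mono hsub
      _ ≤ volume D1 + volume D2 := measure_union_le _ _
      _ = _ := hsum
  · calc ENNReal.ofReal ((t ^ 2 + (1 - t) ^ 2) / 2) = volume D1 + volume D2 := hsum.symm
      _ = volume (D1 ∪ D2) + volume (D1 ∩ D2) := (measure_union_add_inter D1 hmeas2).symm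
      _ = volume (D1 ∪ D2) := by rw [hint', add_zero]
      _ ≤ volume (E ∪ ({p : ℝ × ℝ | p.1 = 0} ∪ {p : ℝ × ℝ | p.2 = 0})) := measure_mono hsup
      _ ≤ volume E + volume ({p : ℝ × ℝ | p.1 = 0} ∪ {p : ℝ × ℝ | p.2 = 0}) :=
        measure_union_le _ _
      _ = volume E := by rw [measure_union_null (vol_fst_eq 0) (vol_snd_eq 0), add_zero]

end Stmt5Aux

end Stmt5AuxSection

open Stmt5Aux in
/-- Let θ = 2π/k with k even, k ≥ 4. Let T ⊂ ℝ² be the open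
isosceles triangle with apex at the origin, symmetric about the axis of the
cone {u : angle(u) ∈ [0,θ)} (the axis makes angle θ/2 with the x-axis), whose
side opposite the apex has length ℓ and lies at distance (ℓ/2)·cot(θ/2) from
the apex.  Let w be the point on that opposite side at distance r from one
endpoint (0 ≤ r ≤ ℓ), and let T' be the reflection of T through the midpoint
of the segment from the origin to w (i.e. the image of T under x ↦ w − x).
Then area(T' \ T) = α(r² + (ℓ−r)²) with α = cos(θ/2)/(4 sin(θ/2)). -/
theorem stmt_5 (k : ℕ) (hk : 4 ≤ k) (hke : Even k) (ℓ r : ℝ) (hℓ : 0 < ℓ)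
    (hr0 : 0 ≤ r) (hrℓ : r ≤ ℓ) :
    let θ : ℝ := 2 * π / k
    let α : ℝ := Real.cos (θ / 2) / (4 * Real.sin (θ / 2))
    let axis : ℝ × ℝ := (Real.cos (θ / 2), Real.sin (θ / 2))
    let perp : ℝ × ℝ := (-Real.sin (θ / 2), Real.cos (θ / 2))
    let h : ℝ := (ℓ / 2) * (Real.tan (θ / 2))⁻¹
    -- the two endpoints of the side of T opposite the apex
    let a : ℝ × ℝ := h • axis - (ℓ / 2) • perp
    let b : ℝ × ℝ := h • axis + (ℓ / 2) • perp
    -- the point on that side at distance r from the endpoint a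
    let w : ℝ × ℝ := a + (r / ℓ) • (b - a)
    let T : Set (ℝ × ℝ) := interior (convexHull ℝ {(0 : ℝ × ℝ), a, b})
    let T' : Set (ℝ × ℝ) := (fun x => w - x) '' T
    volume (T' \ T) = ENNReal.ofReal (α * (r ^ 2 + (ℓ - r) ^ 2)) := by
  intro θ α axis perp h a b w T T'
  have hk4 : (4:ℝ) ≤ (k:ℝ) := by exact_mod_cast hk
  have hkpos : (0:ℝ) < (k:ℝ) := by linarith
  have hθ2 : θ / 2 = π / k := by show (2 * π / k) / 2 = π / k; ring
  have hs : 0 < Real.sin (θ / 2) := by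
    rw [hθ2]
    apply Real.sin_pos_of_pos_of_lt_pi
    · positivity
    · rw [div_lt_iff₀ hkpos]
      nlinarith [pi_pos]
  have hc : 0 < Real.cos (θ / 2) := by
    rw [hθ2]
    apply Real.cos_pos_of_mem_Ioo
    constructor
    · have : 0 < π / k := by positivity
      linarith [pi_pos]
    · rw [div_lt_div_iff₀ hkpos two_pos]
      nlinarith [pi_pos]
  set cv := Real.cos (θ / 2) with hcv
  set sv := Real.sin (θ / 2) with hsv
  have hpyth : sv ^ 2 + cv ^ 2 = 1 := Real.sin_sq_add_cos_sq _
  have htan : Real.tan (θ / 2) = sv / cv := Real.tan_eq_sin_div_cos _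
  have hhdef : h = (ℓ / 2) * (sv / cv)⁻¹ := by
    show (ℓ / 2) * (Real.tan (θ / 2))⁻¹ = _
    rw [htan]
  have hh : 0 < h := by rw [hhdef]; positivity
  have ha : a = (h * cv + (ℓ / 2) * sv, h * sv - (ℓ / 2) * cv) := by
    show h • ((cv, sv) : ℝ × ℝ) - (ℓ / 2) • ((-sv, cv) : ℝ × ℝ) = _
    rw [Prod.smul_mk, Prod.smul_mk, Prod.mk_sub_mk, Prod.mk.injEq]
    simp only [smul_eq_mul]
    exact ⟨by ring, trivial⟩
  have hb : b = (h * cv - (ℓ / 2) * sv, h * sv + (ℓ / 2) * cv) := by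
    show h • ((cv, sv) : ℝ × ℝ) + (ℓ / 2) • ((-sv, cv) : ℝ × ℝ) = _
    rw [Prod.smul_mk, Prod.smul_mk, Prod.mk_add_mk, Prod.mk.injEq]
    simp only [smul_eq_mul]
    exact ⟨by ring, trivial⟩
  have hcross : a.1 * b.2 - a.2 * b.1 = ℓ * h := by
    rw [ha, hb]
    dsimp only
    linear_combination (ℓ * h) * hpyth
  have hcrosspos : (0:ℝ) < ℓ * h := mul_pos hℓ hh
  set t := r / ℓ with htdef
  have ht0 : 0 ≤ t := div_nonneg hr0 hℓ.le
  have ht1 : t ≤ 1 := (div_le_one hℓ).2 hrℓ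
  have hw : w = lmap a b (1 - t, t) := by
    rw [lmap_apply]
    show a + (r / ℓ) • (b - a) = _
    rw [htdef, Prod.ext_iff]
    dsimp only
    constructor <;> simp only [Prod.fst_add, Prod.snd_add, Prod.smul_fst, Prod.smul_snd,
      Prod.fst_sub, Prod.snd_sub, smul_eq_mul] <;> ring
  set K := convexHull ℝ {(0 : ℝ × ℝ), a, b} with hKdef
  set K' := (fun x => w - x) '' K with hK'def
  have hKconv : Convex ℝ K := convex_convexHull ℝ _
  have hK'conv : Convex ℝ K' := by
    rintro x ⟨u, hu, rfl⟩ y ⟨v, hv, rfl⟩ s t' hs' ht' hst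
    refine ⟨s • u + t' • v, hKconv hu hv hs' ht' hst, ?_⟩
    have : s • (w - u) + t' • (w - v) = (s + t') • w - (s • u + t' • v) := by module
    rw [this, hst, one_smul]
  have hfrK : volume (frontier K) = 0 := hKconv.addHaar_frontier volume
  have hfrK' : volume (frontier K') = 0 := hK'conv.addHaar_frontier volume
  have hT : T = interior K := rfl
  have hT' : T' = interior K' := by
    show (fun x => w - x) '' T = _
    rw [hT, hK'def,
      show (fun x => w - x) '' interior K = (Homeomorph.subLeft w) '' interior K from rfl,
      Homeomorph.image_interior]
    rfl
  have hstep1 : volume (T' \ T) = volume (K' \ K) := by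
    apply measure_congr
    have h1 := interior_ae_eq_of_null_frontier hfrK
    have h2 := interior_ae_eq_of_null_frontier hfrK'
    rw [hT, hT']
    rw [Filter.eventuallyEq_set] at h1 h2 ⊢
    filter_upwards [h1, h2] with x hx1 hx2
    simp only [Set.mem_diff, hx1, hx2]
  have hKim : K = lmap a b '' Sset := hull3 a b
  have hinj : Function.Injective (lmap a b) :=
    lmap_injective (by rw [hcross]; exact hcrosspos.ne')
  have hK'im2 : K' = lmap a b '' ((fun z : ℝ × ℝ => (1 - t, t) - z) '' Sset) := by
    rw [hK'def, hKim, Set.image_image, Set.image_image]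
    apply Set.image_congr'
    intro z
    rw [map_sub, ← hw]
  have hdiff : K' \ K = lmap a b '' (((fun z : ℝ × ℝ => (1 - t, t) - z) '' Sset) \ Sset) := by
    rw [Set.image_diff hinj, ← hK'im2, ← hKim]
  rw [hstep1, hdiff, lmap_image_vol, hcross, vol_D t ht0 ht1,
    abs_of_pos hcrosspos, ← ENNReal.ofReal_mul hcrosspos.le]
  congr 1
  have hα : α = cv / (4 * sv) := rfl
  rw [hα, hhdef, htdef]
  field_simp
  ring
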